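/- (Nonexistence of perfect codes in rank metric) Let q be a prime power and m, n positive integers. There is no perfect code in rank metric: for every set C of m×n matrices over F_q with |C| ≥ 2 and minimum rank distance d such that t = ⌊(d−1)/2⌋ ≥ 1, the strict inequality |C| · B_t < q^{mn} holds, where B_t is the number of m×n matrices over F_q of rank at most t; in particular the equality |C| · B_t = q^{mn} is impossible. -/

import Mathlib

/-- Number of `m × n` matrices over `F` of rank at most `t`. -/
noncomputable def ballCount (F : Type*) [Field F] [Fintype F] (m n t : ℕ) : ℕ :=
  Nat.card {A : Matrix (Fin m) (Fin n) F // A.rank ≤ t}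

/-- `d` is the minimum rank distance of the code `C` (a set of `m × n` matrices over `F`). -/
def IsMinRankDist {F : Type*} [Field F] [Fintype F] {m n : ℕ}
    (C : Set (Matrix (Fin m) (Fin n) F)) (d : ℕ) : Prop :=
  (∀ c₁ ∈ C, ∀ c₂ ∈ C, c₁ ≠ c₂ → d ≤ (c₁ - c₂).rank) ∧
  ∃ c₁ ∈ C, ∃ c₂ ∈ C, c₁ ≠ c₂ ∧ (c₁ - c₂).rank = d

section Aux

open Matrix Module

variable {F : Type*} [Field F]

/-- Cardinality of the space of matrices. -/
lemma aux_card_matrix (F : Type*) [Field F] [Fintype F] (a b : ℕ) :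
    Nat.card (Matrix (Fin a) (Fin b) F) = Fintype.card F ^ (a * b) := by
  have : Nat.card (Fin a → Fin b → F) = Fintype.card F ^ (a * b) := by
    rw [Nat.card_fun, Nat.card_fun, Nat.card_eq_fintype_card (α := F),
      Nat.card_eq_fintype_card (α := Fin b), Nat.card_eq_fintype_card (α := Fin a),
      ← pow_mul, Fintype.card_fin, Fintype.card_fin, mul_comm]
  exact this

/-- If the top `k` rows of `D` vanish and `k + r = m` then `rank D ≤ r`. -/
lemma aux_rank_le_of_top_rows_zero {m n k r : ℕ} (hm : k + r = m)
    (D : Matrix (Fin m) (Fin n) F) (h0 : ∀ i : Fin m, (i : ℕ) < k → D i = 0) :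
    D.rank ≤ r := by
  rw [Matrix.rank_eq_finrank_span_row]
  have hsub : Submodule.span F (Set.range D) ≤
      Submodule.span F (Set.range (fun j : Fin r => D ⟨k + j, by omega⟩)) := by
    rw [Submodule.span_le]
    rintro _ ⟨i, rfl⟩
    by_cases hik : (i : ℕ) < k
    · rw [h0 i hik]; exact Submodule.zero_mem _
    · have hjr : (i : ℕ) - k < r := by omega
      have hieq : i = (⟨k + ((⟨(i : ℕ) - k, hjr⟩ : Fin r) : ℕ), by omega⟩ : Fin m) := by
        apply Fin.ext
        show (i : ℕ) = k + ((i : ℕ) - k)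
        omega
      rw [hieq]
      exact Submodule.subset_span ⟨⟨(i : ℕ) - k, hjr⟩, rfl⟩
  calc finrank F (Submodule.span F (Set.range D))
      ≤ finrank F (Submodule.span F (Set.range (fun j : Fin r => D ⟨k + j, by omega⟩))) :=
        Submodule.finrank_mono hsub
    _ ≤ Fintype.card (Fin r) := finrank_range_le_card _
    _ = r := Fintype.card_fin r

/-- A matrix of rank at most `t` factors through `F^t`. -/
lemma aux_exists_factorization {m n t : ℕ} (A : Matrix (Fin m) (Fin n) F)
    (h : A.rank ≤ t) :
    ∃ (B : Matrix (Fin m) (Fin t) F) (C : Matrix (Fin t) (Fin n) F), A = B * C := by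
  classical
  set W := Submodule.span F (Set.range Aᵀ) with hWdef
  have hfin : finrank F W ≤ t := by
    rw [Matrix.rank_eq_finrank_span_cols] at h; exact h
  set r := finrank F W with hr
  let b : Basis (Fin r) F W := Module.finBasis F W
  have hcol : ∀ j : Fin n, Aᵀ j ∈ W := fun j => Submodule.subset_span ⟨j, rfl⟩
  refine ⟨Matrix.of (fun i s => if hs : (s : ℕ) < r then ((b ⟨s, hs⟩ : W) : Fin m → F) i else 0),
    Matrix.of (fun s j => if hs : (s : ℕ) < r then b.repr ⟨Aᵀ j, hcol j⟩ ⟨s, hs⟩ else 0), ?_⟩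
  ext i j
  rw [Matrix.mul_apply]
  have key : ∀ g : Fin r → F,
      (∑ s : Fin t, if hs : (s : ℕ) < r then g ⟨s, hs⟩ else 0) = ∑ s : Fin r, g s := by
    intro g
    have hg : (∑ s : Fin r, g s) = ∑ s : Fin r, if hs : (s : ℕ) < r then g ⟨s, hs⟩ else 0 := by
      apply Finset.sum_congr rfl
      intro s _
      rw [dif_pos s.isLt]
    rw [hg, Fin.sum_univ_eq_sum_range (fun s => if hs : s < r then g ⟨s, hs⟩ else 0) t,
      Fin.sum_univ_eq_sum_range (fun s => if hs : s < r then g ⟨s, hs⟩ else 0) r]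
    symm
    apply Finset.sum_subset (Finset.range_subset_range.2 hfin)
    intro x _ hxr
    rw [dif_neg (by simpa using hxr)]
  have hsum : (∑ s : Fin t,
      (if hs : (s : ℕ) < r then ((b ⟨s, hs⟩ : W) : Fin m → F) i else 0) *
      (if hs : (s : ℕ) < r then b.repr ⟨Aᵀ j, hcol j⟩ ⟨s, hs⟩ else 0)) =
      ∑ s : Fin r, ((b s : W) : Fin m → F) i * b.repr ⟨Aᵀ j, hcol j⟩ s := by
    rw [← key (fun s => ((b s : W) : Fin m → F) i * b.repr ⟨Aᵀ j, hcol j⟩ s)]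
    apply Finset.sum_congr rfl
    intro s _
    by_cases hs : (s : ℕ) < r
    · rw [dif_pos hs, dif_pos hs, dif_pos hs]
    · rw [dif_neg hs, dif_neg hs, dif_neg hs, zero_mul]
  simp only [Matrix.of_apply]
  rw [hsum]
  have hrepr := b.sum_repr ⟨Aᵀ j, hcol j⟩
  have hrepr' : (∑ s : Fin r, b.repr ⟨Aᵀ j, hcol j⟩ s • ((b s : W) : Fin m → F)) = Aᵀ j := by
    have := congrArg (Subtype.val) hrepr
    simp only [Submodule.coe_sum, Submodule.coe_smul] at this
    exact this
  have := congrFun hrepr' i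
  simp only [Finset.sum_apply, Pi.smul_apply, smul_eq_mul] at this
  rw [Finset.sum_congr rfl (fun s _ => mul_comm (((b s : W) : Fin m → F) i) _)]
  rw [this]
  rfl

/-- Strict upper bound on the number of matrices of rank at most `t`. -/
lemma aux_ballCount_lt (F : Type*) [Field F] [Fintype F] (m n t : ℕ)
    (hm : 0 < m) (hn : 0 < n) (ht : 1 ≤ t) :
    ballCount F m n t < Fintype.card F ^ (t * (m + n)) := by
  classical
  have hfac : ∀ A : {A : Matrix (Fin m) (Fin n) F // A.rank ≤ t},
      ∃ p : Matrix (Fin m) (Fin t) F × Matrix (Fin t) (Fin n) F, (A : Matrix (Fin m) (Fin n) F) = p.1 * p.2 := by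
    intro A
    obtain ⟨B, C, hBC⟩ := aux_exists_factorization (A : Matrix (Fin m) (Fin n) F) A.2
    exact ⟨(B, C), hBC⟩
  choose f hf using hfac
  have hinj : Function.Injective f := by
    intro A A' h
    apply Subtype.ext
    rw [hf A, hf A', h]
  have hnotsurj : ¬ Function.Surjective f := by
    intro hs
    set p₁ : Matrix (Fin m) (Fin t) F × Matrix (Fin t) (Fin n) F := (0, 0) with hp₁
    set p₂ : Matrix (Fin m) (Fin t) F × Matrix (Fin t) (Fin n) F :=
      (0, Matrix.of (fun _ _ => (1 : F))) with hp₂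
    have hpne : p₁ ≠ p₂ := by
      intro h
      have := congrFun (congrFun (congrArg Prod.snd h) ⟨0, ht⟩) ⟨0, hn⟩
      simp [hp₁, hp₂] at this
    obtain ⟨A₁, h1⟩ := hs p₁
    obtain ⟨A₂, h2⟩ := hs p₂
    have hA₁ : (A₁ : Matrix (Fin m) (Fin n) F) = 0 := by rw [hf A₁, h1]; simp [hp₁]
    have hA₂ : (A₂ : Matrix (Fin m) (Fin n) F) = 0 := by rw [hf A₂, h2]; simp [hp₂]
    have : A₁ = A₂ := Subtype.ext (hA₁.trans hA₂.symm)
    exact hpne (h1 ▸ h2 ▸ this ▸ rfl)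
  have hlt := Fintype.card_lt_of_injective_not_surjective f hinj hnotsurj
  have e1 : ballCount F m n t = Fintype.card {A : Matrix (Fin m) (Fin n) F // A.rank ≤ t} :=
    Nat.card_eq_fintype_card
  have e2 : Fintype.card (Matrix (Fin m) (Fin t) F × Matrix (Fin t) (Fin n) F)
      = Fintype.card F ^ (t * (m + n)) := by
    rw [Fintype.card_prod, ← Nat.card_eq_fintype_card (α := Matrix (Fin m) (Fin t) F),
      ← Nat.card_eq_fintype_card (α := Matrix (Fin t) (Fin n) F),
      aux_card_matrix, aux_card_matrix, ← pow_add]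
    ring_nf
  rw [e1]
  rw [← e2]
  exact hlt

/-- Singleton-type bound. -/
lemma aux_card_le {m n d : ℕ} [Fintype F] (C : Set (Matrix (Fin m) (Fin n) F))
    (hd1 : 1 ≤ d) (hdm : d ≤ m)
    (hdist : ∀ c₁ ∈ C, ∀ c₂ ∈ C, c₁ ≠ c₂ → d ≤ (c₁ - c₂).rank) :
    Nat.card C ≤ Fintype.card F ^ ((m - (d - 1)) * n) := by
  classical
  set k := m - (d - 1) with hk
  have hkr : k + (d - 1) = m := by omega
  let f : C → Matrix (Fin k) (Fin n) F := fun c =>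
    Matrix.of (fun i j => (c : Matrix (Fin m) (Fin n) F) ⟨(i : ℕ), by omega⟩ j)
  have hinj : Function.Injective f := by
    intro c₁ c₂ h
    apply Subtype.ext
    by_contra hne
    have hr := hdist _ c₁.2 _ c₂.2 hne
    have hz : ∀ i : Fin m, (i : ℕ) < k →
        ((c₁ : Matrix (Fin m) (Fin n) F) - (c₂ : Matrix (Fin m) (Fin n) F)) i = 0 := by
      intro i hik
      funext j
      have := congrFun (congrFun h ⟨(i : ℕ), hik⟩) j
      simp only [f, Matrix.of_apply] at this
      simp only [Matrix.sub_apply, Pi.zero_apply]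
      convert sub_eq_zero.2 this using 2
    have hle := aux_rank_le_of_top_rows_zero hkr _ hz
    omega
  calc Nat.card C ≤ Nat.card (Matrix (Fin k) (Fin n) F) :=
        Nat.card_le_card_of_injective f hinj
    _ = Fintype.card F ^ (k * n) := aux_card_matrix F k n

/-- Key asymmetric inequality. -/
lemma aux_key {F : Type*} [Field F] [Fintype F] {m n t d : ℕ}
    (hm : 0 < m) (hn : 0 < n) (ht : 1 ≤ t) (hmn : m ≤ n)
    (C : Set (Matrix (Fin m) (Fin n) F))
    (hdist : ∀ c₁ ∈ C, ∀ c₂ ∈ C, c₁ ≠ c₂ → d ≤ (c₁ - c₂).rank)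
    (hdm : d ≤ m) (h2t : 2 * t + 1 ≤ d) :
    Nat.card C * ballCount F m n t < Fintype.card F ^ (m * n) := by
  have h1 := aux_card_le C (by omega) hdm hdist
  have h2 := aux_ballCount_lt F m n t hm hn ht
  have hq2 : 2 ≤ Fintype.card F := Fintype.one_lt_card
  have hpos : 0 < Fintype.card F ^ ((m - (d - 1)) * n) := Nat.pow_pos (by omega)
  have hexp : (m - (d - 1)) * n + t * (m + n) ≤ m * n := by
    have e1 : m - (d - 1) ≤ m - 2 * t := by omega
    have e2 : (m - (d - 1)) * n ≤ (m - 2 * t) * n := Nat.mul_le_mul_right n e1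
    have e3 : t * (m + n) ≤ t * n + t * n := by
      rw [Nat.mul_add]
      exact Nat.add_le_add_right (Nat.mul_le_mul_left t hmn) _
    have e4 : ((m - 2 * t) + 2 * t) * n = (m - 2 * t) * n + (t * n + t * n) := by ring
    have e5 : m - 2 * t + 2 * t = m := by omega
    calc (m - (d - 1)) * n + t * (m + n) ≤ (m - 2 * t) * n + (t * n + t * n) := by omega
      _ = ((m - 2 * t) + 2 * t) * n := e4.symm
      _ = m * n := by rw [e5]
  calc Nat.card C * ballCount F m n t
      ≤ Fintype.card F ^ ((m - (d - 1)) * n) * ballCount F m n t :=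
        Nat.mul_le_mul_right _ h1
    _ < Fintype.card F ^ ((m - (d - 1)) * n) * Fintype.card F ^ (t * (m + n)) := by
        exact Nat.mul_lt_mul_of_pos_left h2 hpos
    _ = Fintype.card F ^ ((m - (d - 1)) * n + t * (m + n)) := (pow_add _ _ _).symm
    _ ≤ Fintype.card F ^ (m * n) := Nat.pow_le_pow_right (by omega) hexp

end Aux

open Matrix

/-- There are no perfect codes in rank metric. -/
theorem stmt5 (q : ℕ) (F : Type*) [Field F] [Fintype F] (hq : Fintype.card F = q)
    (m n : ℕ) (hm : 0 < m) (hn : 0 < n)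
    (C : Set (Matrix (Fin m) (Fin n) F)) (hC : 2 ≤ Nat.card C)
    (d : ℕ) (hd : IsMinRankDist C d) (ht : 1 ≤ (d - 1) / 2) :
    Nat.card C * ballCount F m n ((d - 1) / 2) < q ^ (m * n) ∧
    Nat.card C * ballCount F m n ((d - 1) / 2) ≠ q ^ (m * n) := by
  subst hq
  obtain ⟨hlow, c₁, hc₁, c₂, hc₂, hne, hrank⟩ := hd
  set t := (d - 1) / 2 with htdef
  have h2t : 2 * t + 1 ≤ d := by omega
  have hdm : d ≤ m := hrank ▸ Matrix.rank_le_height _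
  have hdn : d ≤ n := hrank ▸ Matrix.rank_le_width _
  have main : Nat.card C * ballCount F m n t < Fintype.card F ^ (m * n) := by
    rcases le_or_gt m n with hmn | hmn
    · exact aux_key hm hn ht hmn C hlow hdm h2t
    · -- transpose the code
      set C' : Set (Matrix (Fin n) (Fin m) F) := (fun A => Aᵀ) '' C with hC'
      have htrinj : Function.Injective (fun A : Matrix (Fin m) (Fin n) F => Aᵀ) := by
        intro a b h
        have := congrArg Matrix.transpose h
        simpa using this
      have hdist' : ∀ c₁' ∈ C', ∀ c₂' ∈ C', c₁' ≠ c₂' → d ≤ (c₁' - c₂').rank := by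
        rintro _ ⟨a, ha, rfl⟩ _ ⟨b, hb, rfl⟩ hne'
        have hab : a ≠ b := by rintro rfl; exact hne' rfl
        have : aᵀ - bᵀ = (a - b)ᵀ := (Matrix.transpose_sub a b).symm
        rw [this, Matrix.rank_transpose]
        exact hlow a ha b hb hab
      have hkey := aux_key hn hm ht (le_of_lt hmn) C' hdist' hdn h2t
      have hcard : Nat.card C' = Nat.card C :=
        Nat.card_image_of_injective htrinj C
      have hball : ballCount F n m t = ballCount F m n t := by
        apply Nat.card_congr
        exact
          { toFun := fun A => ⟨(A : Matrix (Fin n) (Fin m) F)ᵀ, by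
              rw [Matrix.rank_transpose]; exact A.2⟩
            invFun := fun A => ⟨(A : Matrix (Fin m) (Fin n) F)ᵀ, by
              rw [Matrix.rank_transpose]; exact A.2⟩
            left_inv := fun A => by simp
            right_inv := fun A => by simp }
      rw [hcard, hball, mul_comm n m] at hkey
      exact hkey
  exact ⟨main, main.ne⟩
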